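/- For every integer n ≥ 1 and every x ∈ [n, n+1), the translated indicator is bounded below by its value at the right endpoint: τ_{n+1/2} 1_{[0,1]}(x) ≥ τ_{n+1/2} 1_{[0,1]}(n+1). -/

import Mathlib

open MeasureTheory Real Set ENNReal ComplexOrder

noncomputable section

/-- The Haar measure `ω_α(dz) = z^(2α+1) dz` of the Bessel–Kingman hypergroup,
supported on `(0, ∞)`. -/
def omegaM (α : ℝ) : Measure ℝ :=
  (volume.restrict (Set.Ioi (0:ℝ))).withDensity fun z => ENNReal.ofReal (z ^ (2*α+1))

/-- The interval `I_{n+1} = [n, n+1)` (0-based reindexing of the paper's `I_n = [n-1, n)`). -/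
def In (n : ℕ) : Set ℝ := Set.Ico (n : ℝ) ((n : ℝ) + 1)

/-- `ω_α`-measure of the `n`-th interval. -/
def wn (α : ℝ) (n : ℕ) : ℝ≥0∞ := omegaM α (In n)

/-- The discrete amalgam norm `‖f‖_{p,q}` (with the conventions of the paper for
`p = ∞` or `q = ∞`, where the corresponding integral/sum becomes a supremum). -/
def amalgamNorm (α : ℝ) (p q : ℝ≥0∞) {E : Type*} [NormedAddCommGroup E] (f : ℝ → E) : ℝ≥0∞ :=
  let A : ℕ → ℝ≥0∞ := fun n =>
    if p = ∞ then ⨆ x ∈ In n, (‖f x‖₊ : ℝ≥0∞)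
    else ((wn α n)⁻¹ * ∫⁻ x in In n, (‖f x‖₊ : ℝ≥0∞) ^ p.toReal ∂(omegaM α)) ^ (1/p.toReal)
  if q = ∞ then ⨆ n, A n
  else (∑' n, wn α n * (A n) ^ q.toReal) ^ (1/q.toReal)

/-- The constant `C_Γ = Γ(α+1)/(Γ(1/2)·Γ(α+1/2)·2^(2α-1))`. -/
def CGamma (α : ℝ) : ℝ :=
  Real.Gamma (α+1) / (Real.Gamma (1/2) * Real.Gamma (α+1/2) * (2:ℝ) ^ (2*α-1))

/-- The Bessel–Kingman kernel `K_α(x,y,z)`. -/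
def Kker (α x y z : ℝ) : ℝ :=
  CGamma α * ((z^2 - (x-y)^2) * ((x+y)^2 - z^2)) ^ (α - 1/2) / (x*y*z) ^ (2*α)

/-- The hypergroup translation `τ_y f(x)`, with the conventions `τ_0 f = f` and
`τ_y f(0) = f(y)`. -/
def tau {E : Type*} [NormedAddCommGroup E] [NormedSpace ℝ E]
    (α y : ℝ) (f : ℝ → E) (x : ℝ) : E :=
  if y = 0 then f x
  else if x = 0 then f y
  else ∫ z in |x - y|..(x + y), (Kker α x y z * z ^ (2*α+1)) • f z

/-- The hypergroup convolution `(f ⊛ g)(x) = ∫_0^∞ f(y)·τ_y g(x)·y^(2α+1) dy`. -/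
def convBK (α : ℝ) (f g : ℝ → ℂ) (x : ℝ) : ℂ :=
  ∫ y in Set.Ioi (0:ℝ), (y ^ (2*α+1)) • (f y * tau α y g x)

/-- The modified Bessel function `j_α`. -/
def jBessel (α x : ℝ) : ℝ :=
  ∑' k : ℕ, (-1)^k * Real.Gamma (α+1) / (2^(2*k) * (k.factorial : ℝ) * Real.Gamma (α + k + 1))
    * x^(2*k)

/-- The hypergroup Fourier transform `f̂(λ) = ∫_0^∞ f(x)·j_α(λx)·x^(2α+1) dx`. -/
def fourierBK (α : ℝ) (f : ℝ → ℂ) (lam : ℝ) : ℂ :=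
  ∫ x in Set.Ioi (0:ℝ), (jBessel α (lam * x) * x ^ (2*α+1)) • f x

/-- The continuous `(p,∞)`-amalgam norm
`sup_{y ≥ 0} (∫_0^∞ |f(x)|^p · τ_y 1_{[0,1]}(x) · x^(2α+1) dx)^(1/p)`. -/
def contNorm (α p : ℝ) {E : Type*} [NormedAddCommGroup E] (f : ℝ → E) : ℝ≥0∞ :=
  ⨆ y ∈ Set.Ici (0:ℝ),
    (∫⁻ x, (‖f x‖₊ : ℝ≥0∞) ^ p *
        ENNReal.ofReal (tau α y ((Set.Icc (0:ℝ) 1).indicator 1) x) ∂(omegaM α)) ^ (1/p)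

/-- The weight `ω_n = ∫_{n-1}^{n} z^(2α+1) dz`, as a real number. -/
def wIn (α : ℝ) (n : ℕ) : ℝ := ∫ z in ((n:ℝ)-1)..(n:ℝ), z ^ (2*α+1)

lemma key_eq {α : ℝ} (hα : 1/2 ≤ α) {x y z : ℝ} (hx : 0 < x) (hy : 0 < y) (hz : 0 < z)
    (h1 : (x - y)^2 ≤ z^2) (h2 : z ≤ x + y) :
    Kker α x y z * z ^ (2*α+1) =
      (CGamma α * 2 ^ (4*α-1)) *
        ((((z^2 - (x-y)^2)/(4*x*y)) * (1 - (z^2 - (x-y)^2)/(4*x*y))) ^ (α - 1/2)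
          * (z / (2*x*y))) := by
  have hxy : (0:ℝ) < 4*x*y := by positivity
  have hN1 : 0 ≤ z^2 - (x-y)^2 := sub_nonneg.2 h1
  have hN2 : 0 ≤ (x+y)^2 - z^2 := sub_nonneg.2 (by nlinarith)
  have hrw : 1 - (z^2 - (x-y)^2)/(4*x*y) = ((x+y)^2 - z^2)/(4*x*y) := by
    field_simp; ring
  rw [hrw, Real.mul_rpow (by positivity) (by positivity),
      Real.div_rpow hN1 hxy.le, Real.div_rpow hN2 hxy.le]
  unfold Kker
  rw [Real.mul_rpow hN1 hN2]
  have e1 : (x*y*z) ^ (2*α) = x^(2*α) * y^(2*α) * z^(2*α) := by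
    rw [Real.mul_rpow (by positivity) hz.le, Real.mul_rpow hx.le hy.le]
  have e2 : z ^ (2*α+1) = z^(2*α) * z := by
    rw [Real.rpow_add hz, Real.rpow_one]
  have e4 : ∀ w : ℝ, 0 < w → w^(2*α) = w^(2*α-1) * w := by
    intro w hw
    rw [← Real.rpow_add_one hw.ne' (2*α-1)]
    ring_nf
  have e3 : (4*x*y) ^ (α-1/2) * (4*x*y) ^ (α-1/2) = 2^(4*α-2) * (x^(2*α-1) * y^(2*α-1)) := by
    rw [← Real.rpow_add hxy]
    have h4 : (4:ℝ)*x*y = 2^(2:ℝ) * (x * y) := by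
      norm_num; ring
    rw [h4, Real.mul_rpow (by positivity) (by positivity),
        Real.mul_rpow hx.le hy.le, ← Real.rpow_mul (by norm_num : (0:ℝ) ≤ 2)]
    ring_nf
  have e5 : (2:ℝ)^(4*α-1) = 2^(4*α-2) * 2 := by
    rw [← Real.rpow_add_one (by norm_num : (2:ℝ) ≠ 0) (4*α-2)]
    ring_nf
  have e4x := e4 x hx
  have e4y := e4 y hy
  rw [e1, e2, e5, div_mul_eq_mul_div, div_mul_eq_mul_div]
  have px : (0:ℝ) < x^(2*α) := Real.rpow_pos_of_pos hx _
  have py : (0:ℝ) < y^(2*α) := Real.rpow_pos_of_pos hy _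
  have pz : (0:ℝ) < z^(2*α) := Real.rpow_pos_of_pos hz _
  have pq : (0:ℝ) < (4*x*y)^(α-1/2) := Real.rpow_pos_of_pos hxy _
  set A := (z^2 - (x-y)^2) ^ (α-1/2) with hA
  set B := ((x+y)^2 - z^2) ^ (α-1/2) with hB
  set Q := (4*x*y) ^ (α-1/2) with hQ
  set P := (2:ℝ)^(4*α-2) with hP
  set X1 := x^(2*α-1) with hX1
  set Y1 := y^(2*α-1) with hY1
  set X2 := x^(2*α) with hX2
  set Y2 := y^(2*α) with hY2
  set Z := z^(2*α) with hZ
  field_simp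
  linear_combination (CGamma α * A * B * x * y) * e3
    - (CGamma α*A*B*P*Y2) * e4x
    - (CGamma α*A*B*P*X1*x) * e4y

lemma g_cont {α : ℝ} (hα : 1/2 ≤ α) : Continuous fun u : ℝ => (u * (1-u)) ^ (α - 1/2) :=
  (Real.continuous_rpow_const (by linarith)).comp (by continuity)

lemma tau_formula {α : ℝ} (hα : 1/2 ≤ α) {x y : ℝ} (hx : 0 < x) (hy : 0 < y)
    (ha : |x - y| ≤ 1) (hb : 1 ≤ x + y) :
    tau α y ((Set.Icc (0:ℝ) 1).indicator (1 : ℝ → ℝ)) x =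
      (CGamma α * 2 ^ (4*α-1)) *
        ∫ u in (0:ℝ)..((1 - (x-y)^2)/(4*x*y)), (u * (1-u)) ^ (α - 1/2) := by
  have hxy : (0:ℝ) < 4*x*y := by positivity
  set g : ℝ → ℝ := fun u => (u * (1-u)) ^ (α - 1/2) with hg
  set φ : ℝ → ℝ := fun z => (z^2 - (x-y)^2)/(4*x*y) with hφ
  set h : ℝ → ℝ := fun z => (CGamma α * 2 ^ (4*α-1)) * (g (φ z) * (z / (2*x*y))) with hh
  have hcg : Continuous g := g_cont hα
  have hch : Continuous h := by
    apply continuous_const.mul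
    exact (hcg.comp (by fun_prop)).mul (continuous_id.div_const _)
  have haxy : |x - y| ≤ x + y := by
    rw [abs_le]; constructor <;> nlinarith
  have ha0 : (0:ℝ) ≤ |x - y| := abs_nonneg _
  -- step 1 : rewrite the integrand as an indicator
  rw [tau, if_neg hy.ne', if_neg hx.ne']
  have e0 : ∀ z ∈ Set.uIcc (|x-y|) (x+y),
      (Kker α x y z * z ^ (2*α+1)) • ((Set.Icc (0:ℝ) 1).indicator (1 : ℝ → ℝ) z)
        = (Set.Icc (0:ℝ) 1).indicator h z := by
    intro z hz
    rw [Set.uIcc_of_le haxy] at hz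
    by_cases hmem : z ∈ Set.Icc (0:ℝ) 1
    · rw [Set.indicator_of_mem hmem, Set.indicator_of_mem hmem, Pi.one_apply,
        smul_eq_mul, mul_one]
      rcases eq_or_lt_of_le hmem.1 with hz0 | hz0
      · -- z = 0
        rw [hh, hφ]
        simp only [← hz0]
        rw [Real.zero_rpow (by positivity : (2*α+1) ≠ 0)]
        simp
      · rw [hh, hφ]
        have h1 : (x - y)^2 ≤ z^2 := by
          have := hz.1
          rw [← sq_abs (x-y)]
          exact pow_le_pow_left₀ (abs_nonneg _) this 2
        exact key_eq hα hx hy hz0 h1 hz.2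
    · rw [Set.indicator_of_notMem hmem, Set.indicator_of_notMem hmem, smul_zero]
  rw [intervalIntegral.integral_congr e0]
  -- step 2 : split at 1
  have hInt : ∀ a b : ℝ, IntervalIntegrable ((Set.Icc (0:ℝ) 1).indicator h) volume a b := by
    intro a b
    exact ⟨((hch.intervalIntegrable a b).1).indicator measurableSet_Icc,
      ((hch.intervalIntegrable a b).2).indicator measurableSet_Icc⟩
  rw [← intervalIntegral.integral_add_adjacent_intervals (hInt (|x-y|) 1) (hInt 1 (x+y))]
  -- the second piece vanishes
  have e2 : ∫ z in (1:ℝ)..(x+y), (Set.Icc (0:ℝ) 1).indicator h z = 0 := by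
    have : ∀ᵐ z ∂(volume : Measure ℝ), z ∈ Set.uIoc (1:ℝ) (x+y) →
        (Set.Icc (0:ℝ) 1).indicator h z = 0 := by
      filter_upwards with z hz
      rw [Set.uIoc_of_le hb] at hz
      exact Set.indicator_of_notMem (fun hm => absurd hm.2 (not_le.2 hz.1)) _
    rw [intervalIntegral.integral_congr_ae this, intervalIntegral.integral_zero]
  rw [e2, add_zero]
  -- the first piece
  have e1 : ∫ z in (|x-y|)..1, (Set.Icc (0:ℝ) 1).indicator h z = ∫ z in (|x-y|)..1, h z := by
    apply intervalIntegral.integral_congr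
    intro z hz
    rw [Set.uIcc_of_le ha] at hz
    exact Set.indicator_of_mem (show z ∈ Set.Icc (0:ℝ) 1 from ⟨le_trans ha0 hz.1, hz.2⟩) _
  rw [e1]
  -- step 3 : substitution
  have hderiv : ∀ z ∈ Set.uIcc (|x-y|) 1, HasDerivAt φ (z / (2*x*y)) z := by
    intro z _
    have h0 : HasDerivAt (fun w : ℝ => w^2 - (x-y)^2) (2*z) z := by
      simpa using (hasDerivAt_pow 2 z).sub_const ((x-y)^2)
    have h1 := h0.div_const (4*x*y)
    refine h1.congr_deriv ?_
    rw [div_eq_div_iff (by positivity) (by positivity)]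
    ring
  have hsub := intervalIntegral.integral_comp_smul_deriv hderiv
    ((continuous_id.div_const _).continuousOn) hcg
  have e3 : ∫ z in (|x-y|)..1, h z
      = (CGamma α * 2 ^ (4*α-1)) * ∫ z in (|x-y|)..1, (z / (2*x*y)) • (g ∘ φ) z := by
    rw [← intervalIntegral.integral_const_mul]
    apply intervalIntegral.integral_congr
    intro z _
    simp only [hh, Function.comp, smul_eq_mul]
    ring
  rw [e3, hsub]
  have hφa : φ (|x-y|) = 0 := by
    simp only [hφ, sq_abs, sub_self, zero_div]
  have hφ1 : φ 1 = (1 - (x-y)^2)/(4*x*y) := by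
    simp only [hφ, one_pow]
  rw [hφa, hφ1]

/-- On `[n, n+1)` the translated indicator `τ_{n+1/2} 1_{[0,1]}` is bounded below by
its value at the right endpoint `n+1`. -/
theorem translated_indicator_monotone (α : ℝ) (hα : 1/2 ≤ α) (n : ℕ) (hn : 1 ≤ n)
    (x : ℝ) (hx : x ∈ Set.Ico ((n:ℝ)) ((n:ℝ) + 1)) :
    tau α ((n:ℝ) + 1/2) ((Set.Icc (0:ℝ) 1).indicator (1 : ℝ → ℝ)) ((n:ℝ) + 1) ≤
      tau α ((n:ℝ) + 1/2) ((Set.Icc (0:ℝ) 1).indicator (1 : ℝ → ℝ)) x := by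
  have hn1 : (1:ℝ) ≤ (n:ℝ) := by exact_mod_cast hn
  obtain ⟨hxl, hxr⟩ := hx
  have hy0 : (0:ℝ) < (n:ℝ) + 1/2 := by linarith
  have hx0 : (0:ℝ) < x := by linarith
  have hx10 : (0:ℝ) < (n:ℝ) + 1 := by linarith
  have hax : |x - ((n:ℝ) + 1/2)| ≤ 1 := by
    rw [abs_le]; constructor <;> [linarith; linarith]
  have hax1 : |(n:ℝ) + 1 - ((n:ℝ) + 1/2)| ≤ 1 := by
    rw [abs_le]; constructor <;> [linarith; linarith]
  have hbx : (1:ℝ) ≤ x + ((n:ℝ) + 1/2) := by linarith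
  have hbx1 : (1:ℝ) ≤ (n:ℝ) + 1 + ((n:ℝ) + 1/2) := by linarith
  rw [tau_formula hα hx10 hy0 hax1 hbx1, tau_formula hα hx0 hy0 hax hbx]
  have hC : 0 ≤ CGamma α * 2 ^ (4*α-1) := by
    apply mul_nonneg _ (Real.rpow_nonneg (by norm_num) _)
    unfold CGamma
    have h1 := Real.Gamma_pos_of_pos (show (0:ℝ) < α + 1 by linarith)
    have h2 := Real.Gamma_pos_of_pos (show (0:ℝ) < 1/2 by norm_num)
    have h3 := Real.Gamma_pos_of_pos (show (0:ℝ) < α + 1/2 by linarith)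
    have h4 : (0:ℝ) < (2:ℝ) ^ (2*α-1) := Real.rpow_pos_of_pos (by norm_num) _
    positivity
  apply mul_le_mul_of_nonneg_left _ hC
  -- compare the integration limits
  set u1 : ℝ := (1 - ((n:ℝ) + 1 - ((n:ℝ) + 1/2))^2)/(4*((n:ℝ)+1)*((n:ℝ) + 1/2)) with hu1
  set u2 : ℝ := (1 - (x - ((n:ℝ) + 1/2))^2)/(4*x*((n:ℝ) + 1/2)) with hu2
  have hd1 : (0:ℝ) < 4*((n:ℝ)+1)*((n:ℝ) + 1/2) := by positivity
  have hd2 : (0:ℝ) < 4*x*((n:ℝ) + 1/2) := by positivity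
  have hnum1 : (1 - ((n:ℝ) + 1 - ((n:ℝ) + 1/2))^2) = 3/4 := by ring
  have hu1nn : 0 ≤ u1 := by
    rw [hu1, hnum1]; positivity
  have h12 : u1 ≤ u2 := by
    rw [hu1, hu2, div_le_div_iff₀ hd1 hd2, hnum1]
    have t1 : (0:ℝ) ≤ x - n := by linarith
    have t2 : (0:ℝ) ≤ (n:ℝ) + 1 - x := by linarith
    nlinarith [mul_nonneg t1 t2, mul_nonneg (mul_nonneg t1 t2) (by linarith : (0:ℝ) ≤ (n:ℝ) + 1)]
  have hu2le : u2 ≤ 1 := by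
    rw [hu2, div_le_one hd2]
    nlinarith [sq_nonneg (x - ((n:ℝ) + 1/2))]
  apply intervalIntegral.integral_mono_interval le_rfl hu1nn h12
  · apply (ae_restrict_iff' measurableSet_Ioc).2
    filter_upwards with u hu
    exact Real.rpow_nonneg (by nlinarith [hu.1, hu.2]) _
  · exact (g_cont hα).intervalIntegrable _ _
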